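/- Let V₁ be a 2-dimensional vector space over a finite field F_q with q ≥ 5, let G₁ ≤ GL(V₁), and suppose x₁, y₁ is a basis of V₁ such that every g ∈ G₁ stabilizing the line ⟨x₁⟩ also stabilizes the line ⟨y₁⟩. Then for any α ∈ F_q \ {0,1}, the vectors x₁⊗x₁ and y₁⊗(y₁ + αx₁) in V₁⊗V₁ form a base for the central wreath product G₁ ≀_c S₂ acting on V₁⊗V₁ (i.e., the pointwise stabilizer of these two tensors is trivial). -/

import Mathlib

open scoped TensorProduct

/-- Let `V₁` be 2-dimensional over `F_q`, `q ≥ 5`, with basis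
`x₁, y₁` such that every `g ∈ G₁` stabilizing the line `⟨x₁⟩` also stabilizes
`⟨y₁⟩`. Then for any `α ∈ F_q \ {0,1}`, the vectors `x₁⊗x₁` and
`y₁⊗(y₁ + αx₁)` form a base for the central wreath product `G₁ ≀_c S₂`
(the subgroup of `GL(V₁⊗V₁)` generated by the maps `g⊗h`, `g,h ∈ G₁`, and the
swap). -/
theorem stmt_10 {F V : Type*} [Field F] [Fintype F] (hq : 5 ≤ Fintype.card F)
    [AddCommGroup V] [Module F V] (hdim : Module.finrank F V = 2)
    (G₁ : Subgroup (Module.End F V)ˣ)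
    (x₁ y₁ : V) (hbasis : LinearIndependent F ![x₁, y₁])
    (hspan : Submodule.span F {x₁, y₁} = ⊤)
    (hline : ∀ g ∈ G₁, (g : Module.End F V) x₁ ∈ Submodule.span F {x₁} →
      (g : Module.End F V) y₁ ∈ Submodule.span F {y₁})
    (α : F) (hα0 : α ≠ 0) (hα1 : α ≠ 1) :
    ∀ u ∈ Subgroup.closure
      ({u : (Module.End F (V ⊗[F] V))ˣ |
          ∃ g ∈ G₁, ∃ h ∈ G₁, (u : Module.End F (V ⊗[F] V)) =
            TensorProduct.map (g : Module.End F V) (h : Module.End F V)} ∪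
        {u : (Module.End F (V ⊗[F] V))ˣ |
          (u : Module.End F (V ⊗[F] V)) =
            (TensorProduct.comm F V V).toLinearMap}),
      (u : Module.End F (V ⊗[F] V)) (x₁ ⊗ₜ[F] x₁) = x₁ ⊗ₜ[F] x₁ →
      (u : Module.End F (V ⊗[F] V)) (y₁ ⊗ₜ[F] (y₁ + α • x₁)) =
        y₁ ⊗ₜ[F] (y₁ + α • x₁) →
      u = 1 := by
  classical
  intro u hu hfix1 hfix2
  set σ : Module.End F (V ⊗[F] V) := (TensorProduct.comm F V V).toLinearMap with hσdef
  have hσ : ∀ (v w : V), σ (v ⊗ₜ[F] w) = w ⊗ₜ[F] v := by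
    intro v w; simp [hσdef]
  -- unit application lemmas
  have happinv : ∀ (g : (Module.End F V)ˣ) (v : V),
      (↑g⁻¹ : Module.End F V) ((↑g : Module.End F V) v) = v := by
    intro g v
    rw [← Module.End.mul_apply, ← Units.val_mul, inv_mul_cancel, Units.val_one,
      Module.End.one_apply]
  have happinv' : ∀ (g : (Module.End F V)ˣ) (v : V),
      (↑g : Module.End F V) ((↑g⁻¹ : Module.End F V) v) = v := by
    intro g v
    rw [← Module.End.mul_apply, ← Units.val_mul, mul_inv_cancel, Units.val_one,
      Module.End.one_apply]
  -- structure of the closure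
  have hstruct :
      (∃ g ∈ G₁, ∃ h ∈ G₁, (u : Module.End F (V ⊗[F] V)) =
        TensorProduct.map (g : Module.End F V) (h : Module.End F V)) ∨
      (∃ g ∈ G₁, ∃ h ∈ G₁, (u : Module.End F (V ⊗[F] V)) =
        TensorProduct.map (g : Module.End F V) (h : Module.End F V) ∘ₗ σ) := by
    clear hfix1 hfix2
    induction hu using Subgroup.closure_induction with
    | mem x hx =>
      rcases hx with hx | hx
      · exact Or.inl hx
      · refine Or.inr ⟨1, one_mem _, 1, one_mem _, ?_⟩
        have hx' : (↑x : Module.End F (V ⊗[F] V)) = σ := hx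
        apply TensorProduct.ext'
        intro v w
        simp [hx', hσ]
    | one =>
      refine Or.inl ⟨1, one_mem _, 1, one_mem _, ?_⟩
      apply TensorProduct.ext'
      intro v w
      simp
    | mul x y hx hy ihx ihy =>
      rcases ihx with ⟨g, hg, h, hh, hval⟩ | ⟨g, hg, h, hh, hval⟩ <;>
        rcases ihy with ⟨g', hg', h', hh', hval'⟩ | ⟨g', hg', h', hh', hval'⟩
      · refine Or.inl ⟨g * g', mul_mem hg hg', h * h', mul_mem hh hh', ?_⟩
        apply TensorProduct.ext'
        intro v w
        simp [Units.val_mul, Module.End.mul_apply, hval, hval']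
      · refine Or.inr ⟨g * g', mul_mem hg hg', h * h', mul_mem hh hh', ?_⟩
        apply TensorProduct.ext'
        intro v w
        simp [Units.val_mul, Module.End.mul_apply, hval, hval', hσ]
      · refine Or.inr ⟨g * h', mul_mem hg hh', h * g', mul_mem hh hg', ?_⟩
        apply TensorProduct.ext'
        intro v w
        simp [Units.val_mul, Module.End.mul_apply, hval, hval', hσ]
      · refine Or.inl ⟨g * h', mul_mem hg hh', h * g', mul_mem hh hg', ?_⟩
        apply TensorProduct.ext'
        intro v w
        simp [Units.val_mul, Module.End.mul_apply, hval, hval', hσ]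
    | inv x hx ihx =>
      rcases ihx with ⟨g, hg, h, hh, hval⟩ | ⟨g, hg, h, hh, hval⟩
      · refine Or.inl ⟨g⁻¹, inv_mem hg, h⁻¹, inv_mem hh, ?_⟩
        apply Units.inv_eq_of_mul_eq_one_right
        apply TensorProduct.ext'
        intro v w
        simp [Module.End.mul_apply, hval, happinv']
      · refine Or.inr ⟨h⁻¹, inv_mem hh, g⁻¹, inv_mem hg, ?_⟩
        apply Units.inv_eq_of_mul_eq_one_right
        apply TensorProduct.ext'
        intro v w
        simp [Module.End.mul_apply, hval, hσ, happinv']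
  -- set up the basis and coordinate functionals
  have hy_ne : y₁ ≠ 0 := hbasis.ne_zero 1
  have hsp' : ⊤ ≤ Submodule.span F (Set.range ![x₁, y₁]) := by
    rw [show Set.range ![x₁, y₁] = {x₁, y₁} by
      ext v; simp [Fin.exists_fin_two, or_comm], hspan]
  set B : Module.Basis (Fin 2) F V := Module.Basis.mk hbasis hsp' with hBdef
  have hB0 : B 0 = x₁ := by rw [hBdef, Module.Basis.mk_apply]; rfl
  have hB1 : B 1 = y₁ := by rw [hBdef, Module.Basis.mk_apply]; rfl
  have c00 : B.coord 0 x₁ = 1 := by rw [← hB0, Module.Basis.coord_apply, Module.Basis.repr_self]; simp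
  have c10 : B.coord 1 x₁ = 0 := by rw [← hB0, Module.Basis.coord_apply, Module.Basis.repr_self]; simp
  have c01 : B.coord 0 y₁ = 0 := by rw [← hB1, Module.Basis.coord_apply, Module.Basis.repr_self]; simp
  have c11 : B.coord 1 y₁ = 1 := by rw [← hB1, Module.Basis.coord_apply, Module.Basis.repr_self]; simp
  have hrepr : ∀ v : V, (B.coord 0 v) • x₁ + (B.coord 1 v) • y₁ = v := by
    intro v
    have h := B.sum_repr v
    rw [Fin.sum_univ_two, hB0, hB1] at h
    simpa [Module.Basis.coord_apply] using h
  set L : Fin 2 → Fin 2 → (V ⊗[F] V →ₗ[F] F) := fun i j =>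
    (TensorProduct.lid F F).toLinearMap ∘ₗ TensorProduct.map (B.coord i) (B.coord j)
    with hLdef
  have hL : ∀ (i j : Fin 2) (v w : V), L i j (v ⊗ₜ[F] w) = B.coord i v * B.coord j w := by
    intro i j v w
    simp [hLdef, TensorProduct.lid_tmul, smul_eq_mul]
  -- common analysis of the first fixed point equation
  have hfirst : ∀ g ∈ G₁, ∀ h ∈ G₁,
      (↑g : Module.End F V) x₁ ⊗ₜ[F] (↑h : Module.End F V) x₁ = x₁ ⊗ₜ[F] x₁ →
      ∃ a c μ ν : F, a * c = 1 ∧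
        (↑g : Module.End F V) x₁ = a • x₁ ∧ (↑h : Module.End F V) x₁ = c • x₁ ∧
        (↑g : Module.End F V) y₁ = μ • y₁ ∧ (↑h : Module.End F V) y₁ = ν • y₁ := by
    intro g hg h hh heq
    set a := B.coord 0 ((↑g : Module.End F V) x₁) with ha
    set b := B.coord 1 ((↑g : Module.End F V) x₁) with hb
    set c := B.coord 0 ((↑h : Module.End F V) x₁) with hc
    set d := B.coord 1 ((↑h : Module.End F V) x₁) with hd
    have e00 : a * c = 1 := by
      have := congrArg (L 0 0) heq
      simpa [hL, c00, ha, hc] using this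
    have e01 : a * d = 0 := by
      have := congrArg (L 0 1) heq
      simpa [hL, c00, c10, ha, hd] using this
    have e10 : b * c = 0 := by
      have := congrArg (L 1 0) heq
      simpa [hL, c00, c10, hb, hc] using this
    have ha0 : a ≠ 0 := left_ne_zero_of_mul_eq_one e00
    have hc0 : c ≠ 0 := right_ne_zero_of_mul_eq_one e00
    have hd0 : d = 0 := by
      rcases mul_eq_zero.1 e01 with h' | h'
      · exact absurd h' ha0
      · exact h'
    have hb0 : b = 0 := by
      rcases mul_eq_zero.1 e10 with h' | h'
      · exact h'
      · exact absurd h' hc0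
    have hgx : (↑g : Module.End F V) x₁ = a • x₁ := by
      have := hrepr ((↑g : Module.End F V) x₁)
      rw [← ha, ← hb, hb0] at this
      simpa using this.symm
    have hhx : (↑h : Module.End F V) x₁ = c • x₁ := by
      have := hrepr ((↑h : Module.End F V) x₁)
      rw [← hc, ← hd, hd0] at this
      simpa using this.symm
    have hgxm : (↑g : Module.End F V) x₁ ∈ Submodule.span F {x₁} := by
      rw [hgx]
      exact Submodule.smul_mem _ a (Submodule.mem_span_singleton_self x₁)
    have hhxm : (↑h : Module.End F V) x₁ ∈ Submodule.span F {x₁} := by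
      rw [hhx]
      exact Submodule.smul_mem _ c (Submodule.mem_span_singleton_self x₁)
    obtain ⟨μ, hμ⟩ := Submodule.mem_span_singleton.1 (hline g hg hgxm)
    obtain ⟨ν, hν⟩ := Submodule.mem_span_singleton.1 (hline h hh hhxm)
    exact ⟨a, c, μ, ν, e00, hgx, hhx, hμ.symm, hν.symm⟩
  rcases hstruct with ⟨g, hg, h, hh, hval⟩ | ⟨g, hg, h, hh, hval⟩
  · -- untwisted case: u = g ⊗ h
    rw [hval] at hfix1 hfix2
    rw [TensorProduct.map_tmul] at hfix1
    obtain ⟨a, c, μ, ν, hac, hgx, hhx, hgy, hhy⟩ := hfirst g hg h hh hfix1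
    have ha0 : a ≠ 0 := left_ne_zero_of_mul_eq_one hac
    have hc0 : c ≠ 0 := right_ne_zero_of_mul_eq_one hac
    -- second equation
    have heq2 : (μ • y₁) ⊗ₜ[F] (ν • y₁ + (α * c) • x₁) = y₁ ⊗ₜ[F] (y₁ + α • x₁) := by
      rw [← hfix2, TensorProduct.map_tmul, hgy, map_add, hhy, map_smul, hhx,
        smul_smul]
    have e10 : μ * (α * c) = α := by
      have := congrArg (L 1 0) heq2
      simpa [hL, map_add, map_smul, c00, c01, c10, c11, smul_eq_mul, mul_add] using this
    have hμc : μ * c = 1 := by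
      have h' : α * (μ * c) = α * 1 := by linear_combination e10
      exact mul_left_cancel₀ hα0 h'
    have hμ : μ = a := mul_right_cancel₀ hc0 (hμc.trans hac.symm)
    -- conclude g = a • 1, h = c • 1
    have hgid : (↑g : Module.End F V) = a • (1 : Module.End F V) := by
      apply LinearMap.ext_on hspan
      intro v hv
      rcases hv with hv | hv
      · subst hv; simpa using hgx
      · simp only [Set.mem_singleton_iff] at hv
        subst hv
        simp only [LinearMap.smul_apply, Module.End.one_apply]
        rw [hgy, hμ]
    have hhid : (↑h : Module.End F V) = c • (1 : Module.End F V) := by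
      apply LinearMap.ext_on hspan
      intro v hv
      rcases hv with hv | hv
      · subst hv; simpa using hhx
      · simp only [Set.mem_singleton_iff] at hv
        subst hv
        simp only [LinearMap.smul_apply, Module.End.one_apply]
        rw [hhy]
        have e11 : μ * ν = 1 := by
          have := congrArg (L 1 1) heq2
          simpa [hL, map_add, map_smul, c00, c01, c10, c11, smul_eq_mul] using this
        have h1 : a * ν = 1 := by rw [← hμ]; exact e11
        have hν : ν = c := mul_left_cancel₀ ha0 (h1.trans hac.symm)
        rw [hν]
    apply Units.ext
    show (↑u : Module.End F (V ⊗[F] V)) = 1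
    rw [hval]
    apply TensorProduct.ext'
    intro v w
    rw [TensorProduct.map_tmul, hgid, hhid]
    simp only [LinearMap.smul_apply, Module.End.one_apply, Units.val_one]
    rw [TensorProduct.smul_tmul_smul, hac, one_smul]
  · -- twisted case: u = (g ⊗ h) ∘ σ, leads to contradiction
    rw [hval] at hfix1 hfix2
    rw [LinearMap.comp_apply, hσ, TensorProduct.map_tmul] at hfix1
    obtain ⟨a, c, μ, ν, hac, hgx, hhx, hgy, hhy⟩ := hfirst g hg h hh hfix1
    have ha0 : a ≠ 0 := left_ne_zero_of_mul_eq_one hac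
    have hν0 : ν ≠ 0 := by
      intro hν
      rw [hν, zero_smul] at hhy
      have := happinv h y₁
      rw [hhy, map_zero] at this
      exact hy_ne this.symm
    exfalso
    have heq2 : (μ • y₁ + (α * a) • x₁) ⊗ₜ[F] (ν • y₁) = y₁ ⊗ₜ[F] (y₁ + α • x₁) := by
      rw [← hfix2, LinearMap.comp_apply, hσ, TensorProduct.map_tmul, map_add, hgy,
        map_smul, hgx, smul_smul, hhy]
    have e01 := congrArg (L 0 1) heq2
    simp [hL, map_add, map_smul, c00, c01, c10, c11, smul_eq_mul, add_mul] at e01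
    rcases e01 with h' | h' | h'
    · exact hν0 h'
    · exact hα0 h'
    · exact ha0 h'
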